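/- Let (X₁,Y₁), (X₂,Y₂), … be an i.i.d. sequence of pairs of real-valued random variables whose marginal distribution functions F_X and F_Y are continuous, with copula C (so P(X₁ ≤ x, Y₁ ≤ y) = C(F_X(x), F_Y(y)) for all x, y). Then for every fixed v ∈ (0,1], the estimator χ̂ₙ^{Y→X}(v) = 1 − (1/v) ∫₀¹ Ĉₙ(u,v) du converges almost surely, as n → ∞, to χ^{Y→X}_C(v) = 1 − (1/v) ∫₀¹ C(u,v) du. -/

import Mathlib

open MeasureTheory ProbabilityTheory Filter Set Topology

/-- A bivariate copula: boundary conditions and the 2-increasing property on `[0,1]²`. -/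
def IsCopula (C : ℝ → ℝ → ℝ) : Prop :=
  (∀ u ∈ Set.Icc (0:ℝ) 1, C u 0 = 0 ∧ C 0 u = 0 ∧ C u 1 = u ∧ C 1 u = u) ∧
  (∀ u ∈ Set.Icc (0:ℝ) 1, ∀ v ∈ Set.Icc (0:ℝ) 1, C u v ∈ Set.Icc (0:ℝ) 1) ∧
  (∀ u₁ u₂ v₁ v₂ : ℝ, 0 ≤ u₁ → u₁ ≤ u₂ → u₂ ≤ 1 → 0 ≤ v₁ → v₁ ≤ v₂ → v₂ ≤ 1 →
    0 ≤ C u₂ v₂ - C u₁ v₂ - C u₂ v₁ + C u₁ v₁)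

/-- Empirical distribution function of the sample `Z 0 ω, …, Z (n-1) ω`. -/
noncomputable def empCDF {Ω : Type*} (Z : ℕ → Ω → ℝ) (n : ℕ) (ω : Ω) (x : ℝ) : ℝ :=
  (n : ℝ)⁻¹ * ∑ i ∈ Finset.range n, if Z i ω ≤ x then (1:ℝ) else 0

/-- Empirical copula of the sample `(X 0 ω, Y 0 ω), …, (X (n-1) ω, Y (n-1) ω)`. -/
noncomputable def empCopula {Ω : Type*} (X Y : ℕ → Ω → ℝ) (n : ℕ) (ω : Ω) (u v : ℝ) : ℝ :=
  (n : ℝ)⁻¹ * ∑ i ∈ Finset.range n,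
    (if empCDF X n ω (X i ω) ≤ u then (1:ℝ) else 0) *
    (if empCDF Y n ω (Y i ω) ≤ v then (1:ℝ) else 0)

open MeasureTheory ProbabilityTheory Filter Set Topology

lemma exists_quantile {F : ℝ → ℝ} (hFm : Monotone F) (hFc : Continuous F)
    (hbot : Tendsto F atBot (𝓝 0)) (htop : Tendsto F atTop (𝓝 1))
    {u : ℝ} (hu0 : 0 < u) (hu1 : u < 1) :
    ∃ p, F p = u ∧ ∀ x, F x ≤ u ↔ x ≤ p := by
  obtain ⟨a, ha⟩ : ∃ a, F a < u := (hbot.eventually_lt_const hu0).exists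
  obtain ⟨b, hb⟩ : ∃ b, u < F b := (htop.eventually_const_lt hu1).exists
  set S : Set ℝ := {x | F x ≤ u} with hS
  have hne : S.Nonempty := ⟨a, ha.le⟩
  have hbdd : BddAbove S := by
    refine ⟨b, fun x hx => ?_⟩
    by_contra h
    push_neg at h
    exact absurd (hFm h.le) (not_le.2 (lt_of_le_of_lt hx hb))
  set p := sSup S with hp
  have hple : F p ≤ u := by
    by_contra h
    push_neg at h
    have h1 : ∀ᶠ y in 𝓝[<] p, u < F y :=
      ((hFc.tendsto p).mono_left nhdsWithin_le_nhds).eventually_const_lt h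
    obtain ⟨y, hy1, hy2⟩ := (h1.and self_mem_nhdsWithin).exists
    have : ∀ x ∈ S, x ≤ y := by
      intro x hx
      by_contra hxy
      push_neg at hxy
      exact absurd (hFm hxy.le) (not_le.2 (lt_of_le_of_lt hx hy1))
    exact absurd (csSup_le hne this) (not_le.2 hy2)
  have hpge : u ≤ F p := by
    have h1 : ∀ᶠ y in 𝓝[>] p, u ≤ F y := by
      refine eventually_nhdsWithin_of_forall (fun y hy => ?_)
      by_contra h
      push_neg at h
      exact absurd (le_csSup hbdd h.le) (not_le.2 hy)
    exact ge_of_tendsto ((hFc.tendsto p).mono_left nhdsWithin_le_nhds) h1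
  have hFp : F p = u := le_antisymm hple hpge
  exact ⟨p, hFp, fun x => ⟨fun h => le_csSup hbdd h, fun h => hFp ▸ hFm h⟩⟩

lemma no_atoms_of_continuous_cdf (ν : Measure ℝ) [IsProbabilityMeasure ν]
    (hc : Continuous fun x => (ν (Iic x)).toReal) (x : ℝ) : ν {x} = 0 := by
  have hcdf : ProbabilityTheory.cdf ν = fun x => (ν (Iic x)).toReal := by
    funext y; rw [cdf_eq_real]; rfl
  have h1 : ν {x} = (ProbabilityTheory.cdf ν).measure {x} := by rw [measure_cdf]
  rw [h1, StieltjesFunction.measure_singleton]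
  have : Function.leftLim (ProbabilityTheory.cdf ν) x = ProbabilityTheory.cdf ν x := by
    apply leftLim_eq_of_tendsto
    have h2 : Tendsto (⇑(ProbabilityTheory.cdf ν)) (𝓝 x) (𝓝 (ProbabilityTheory.cdf ν x)) := by
      rw [hcdf]; exact hc.tendsto x
    exact h2.mono_left nhdsWithin_le_nhds
  rw [this, sub_self, ENNReal.ofReal_zero]

open scoped Classical in
lemma slln_indicator {Ω : Type*} [MeasurableSpace Ω] (μ : Measure Ω) [IsProbabilityMeasure μ]
    (Z : ℕ → Ω → ℝ × ℝ) (hm : ∀ i, Measurable (Z i))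
    (hindep : iIndepFun Z μ)
    (hident : ∀ i, IdentDistrib (Z i) (Z 0) μ μ)
    {S : Set (ℝ × ℝ)} (hS : MeasurableSet S) :
    ∀ᵐ ω ∂μ, Tendsto
      (fun n : ℕ => (n:ℝ)⁻¹ * ∑ i ∈ Finset.range n, (if Z i ω ∈ S then (1:ℝ) else 0))
      atTop (𝓝 ((μ (Z 0 ⁻¹' S)).toReal)) := by
  set g : ℝ × ℝ → ℝ := S.indicator (fun _ => 1) with hg
  have hgm : Measurable g := measurable_const.indicator hS
  set W : ℕ → Ω → ℝ := fun i ω => g (Z i ω) with hW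
  have hWm : ∀ i, Measurable (W i) := fun i => hgm.comp (hm i)
  have hint : Integrable (W 0) μ := by
    refine Integrable.mono' (integrable_const 1) (hWm 0).aestronglyMeasurable
      (ae_of_all _ fun ω => ?_)
    simp only [hW, hg, Real.norm_eq_abs]
    unfold Set.indicator
    split_ifs <;> norm_num
  have hindep' : Pairwise (Function.onFun (IndepFun · · μ) W) := by
    intro i j hij
    exact (hindep.indepFun hij).comp hgm hgm
  have hident' : ∀ i, IdentDistrib (W i) (W 0) μ μ := fun i => (hident i).comp hgm
  have hmean : μ[W 0] = (μ (Z 0 ⁻¹' S)).toReal := by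
    have : W 0 = (Z 0 ⁻¹' S).indicator (fun _ => (1:ℝ)) := by
      funext ω
      simp [hW, hg, Set.indicator_apply, Set.mem_preimage]
    rw [this, integral_indicator_const _ (hS.preimage (hm 0)), smul_eq_mul, mul_one]; rfl
  filter_upwards [strong_law_ae_real W hint hindep' hident'] with ω hω
  rw [hmean] at hω
  apply hω.congr (fun n => ?_)
  rw [div_eq_inv_mul]
  refine congrArg _ (Finset.sum_congr rfl fun i _ => ?_)
  simp [hW, hg, Set.indicator_apply]

/-- With distinct sample values, the number of indices whose empirical-CDF value is `≤ u`
is `min ⌊n·u⌋ n`. -/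
lemma card_rank_le (Xv : ℕ → ℝ) (n : ℕ)
    (hinj : ∀ i < n, ∀ j < n, Xv i = Xv j → i = j) (u : ℝ) (hu : 0 ≤ u) :
    ((Finset.range n).filter
      (fun i => (n:ℝ)⁻¹ * ∑ j ∈ Finset.range n, (if Xv j ≤ Xv i then (1:ℝ) else 0) ≤ u)).card
      = min (Nat.floor ((n:ℝ) * u)) n := by
  rcases Nat.eq_zero_or_pos n with hn | hn
  · subst hn; simp
  set R : ℕ → ℕ := fun i => ((Finset.range n).filter (fun j => Xv j ≤ Xv i)).card with hR
  set m := Nat.floor ((n:ℝ) * u) with hm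
  have hsum : ∀ i, (∑ j ∈ Finset.range n, (if Xv j ≤ Xv i then (1:ℝ) else 0)) = (R i : ℝ) := by
    intro i; rw [Finset.sum_boole]
  have hcond : ∀ i, ((n:ℝ)⁻¹ * ∑ j ∈ Finset.range n, (if Xv j ≤ Xv i then (1:ℝ) else 0) ≤ u
      ↔ R i ≤ m) := by
    intro i
    rw [hsum, hm, Nat.le_floor_iff (by positivity), inv_mul_le_iff₀ (by exact_mod_cast hn)]
  have hR1 : ∀ i < n, 1 ≤ R i := fun i hi =>
    Finset.card_pos.mpr ⟨i, Finset.mem_filter.mpr ⟨Finset.mem_range.mpr hi, le_refl _⟩⟩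
  have hRn : ∀ i, R i ≤ n := fun i => le_trans (Finset.card_filter_le _ _) (le_of_eq (Finset.card_range n))
  have hmono : ∀ i, ∀ j < n, Xv i < Xv j → R i < R j := by
    intro i j hjn hij
    apply Finset.card_lt_card
    refine ⟨Finset.monotone_filter_right _ (fun k _ hk => le_of_lt (lt_of_le_of_lt hk hij)), ?_⟩
    intro hsub
    have hjmem : j ∈ (Finset.range n).filter (fun k => Xv k ≤ Xv j) :=
      Finset.mem_filter.mpr ⟨Finset.mem_range.mpr hjn, le_refl _⟩
    exact absurd (Finset.mem_filter.mp (hsub hjmem)).2 (not_le.mpr hij)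
  have hinjR : Set.InjOn R (Finset.range n : Set ℕ) := by
    intro i hi j hj hij
    simp only [Finset.coe_range, Set.mem_Iio] at hi hj
    rcases lt_trichotomy (Xv i) (Xv j) with h | h | h
    · exact absurd hij (Nat.ne_of_lt (hmono i j hj h))
    · exact hinj i hi j hj h
    · exact absurd hij.symm (Nat.ne_of_lt (hmono j i hi h))
  have himage : (Finset.range n).image R = Finset.Icc 1 n := by
    apply Finset.eq_of_subset_of_card_le
    · intro k hk
      obtain ⟨i, hi, rfl⟩ := Finset.mem_image.mp hk
      exact Finset.mem_Icc.mpr ⟨hR1 i (Finset.mem_range.mp hi), hRn i⟩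
    · rw [Finset.card_image_of_injOn hinjR, Finset.card_range, Nat.card_Icc]
      omega
  have hcount : ((Finset.range n).filter (fun i => R i ≤ m)).card
      = ((Finset.Icc 1 n).filter (fun k => k ≤ m)).card := by
    rw [← himage, Finset.filter_image]
    rw [Finset.card_image_of_injOn (hinjR.mono (by
      intro x hx
      simp only [Finset.coe_filter, Set.mem_setOf_eq] at hx
      simp only [Finset.coe_range, Set.mem_Iio]
      exact Finset.mem_range.mp hx.1))]
  have hicc : ((Finset.Icc 1 n).filter (fun k => k ≤ m)).card = min m n := by
    have : (Finset.Icc 1 n).filter (fun k => k ≤ m) = Finset.Icc 1 (min m n) := by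
      ext k
      simp only [Finset.mem_filter, Finset.mem_Icc]
      omega
    rw [this, Nat.card_Icc]
    omega
  calc ((Finset.range n).filter
      (fun i => (n:ℝ)⁻¹ * ∑ j ∈ Finset.range n, (if Xv j ≤ Xv i then (1:ℝ) else 0) ≤ u)).card
      = ((Finset.range n).filter (fun i => R i ≤ m)).card := by
        apply congrArg
        apply Finset.filter_congr
        intro i _
        simp only [hcond i]
    _ = min m n := by rw [hcount, hicc]


lemma tendsto_floor_div (u : ℝ) (hu0 : 0 ≤ u) (hu1 : u ≤ 1) :
    Tendsto (fun n : ℕ => (n:ℝ)⁻¹ * (min (Nat.floor ((n:ℝ) * u)) n : ℕ)) atTop (𝓝 u) := by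
  have hmin : ∀ n : ℕ, min (Nat.floor ((n:ℝ) * u)) n = Nat.floor ((n:ℝ) * u) := by
    intro n
    apply min_eq_left
    have : (n:ℝ) * u ≤ n := by nlinarith [Nat.cast_nonneg (α := ℝ) n]
    calc Nat.floor ((n:ℝ) * u) ≤ Nat.floor ((n:ℝ)) := Nat.floor_le_floor this
      _ = n := Nat.floor_natCast n
  simp only [hmin]
  have hlow : Tendsto (fun n : ℕ => u - 1/(n:ℝ)) atTop (𝓝 u) := by
    simpa using (tendsto_const_nhds (x := u)).sub tendsto_one_div_atTop_nhds_zero_nat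
  refine tendsto_of_tendsto_of_tendsto_of_le_of_le' hlow (tendsto_const_nhds (x := u)) ?_ ?_
  · filter_upwards [eventually_ge_atTop 1] with n hn
    have hn0 : (0:ℝ) < n := by exact_mod_cast hn
    have h1 : (n:ℝ) * u - 1 < Nat.floor ((n:ℝ) * u) := Nat.sub_one_lt_floor _
    rw [inv_mul_eq_div, le_div_iff₀ hn0, sub_mul, div_mul_cancel₀ _ (ne_of_gt hn0)]
    linarith [h1]
  · filter_upwards [eventually_ge_atTop 1] with n hn
    have hn0 : (0:ℝ) < n := by exact_mod_cast hn
    have h2 : (Nat.floor ((n:ℝ) * u) : ℝ) ≤ (n:ℝ) * u := Nat.floor_le (by positivity)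
    rw [inv_mul_eq_div, div_le_iff₀ hn0]
    nlinarith [h2]

lemma empCDF_mono {Ω : Type*} (Z : ℕ → Ω → ℝ) (n : ℕ) (ω : Ω) : Monotone (empCDF Z n ω) := by
  intro x y hxy
  unfold empCDF
  apply mul_le_mul_of_nonneg_left _ (by positivity)
  apply Finset.sum_le_sum
  intro i _
  split_ifs with h1 h2 <;> first | rfl | linarith | (exact absurd (le_trans h1 hxy) h2)

lemma empCopula_mono_left {Ω : Type*} (X Y : ℕ → Ω → ℝ) (n : ℕ) (ω : Ω) (v : ℝ) :
    Monotone (fun u => empCopula X Y n ω u v) := by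
  intro x y hxy
  unfold empCopula
  apply mul_le_mul_of_nonneg_left _ (by positivity)
  apply Finset.sum_le_sum
  intro i _
  apply mul_le_mul_of_nonneg_right _ (by positivity)
  split_ifs with h1 h2 <;> first | rfl | linarith | (exact absurd (le_trans h1 hxy) h2)

lemma empCopula_nonneg {Ω : Type*} (X Y : ℕ → Ω → ℝ) (n : ℕ) (ω : Ω) (u v : ℝ) :
    0 ≤ empCopula X Y n ω u v := by
  unfold empCopula
  apply mul_nonneg (by positivity)
  apply Finset.sum_nonneg
  intro i _
  positivity

lemma empCopula_le_one {Ω : Type*} (X Y : ℕ → Ω → ℝ) (n : ℕ) (ω : Ω) (u v : ℝ) :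
    empCopula X Y n ω u v ≤ 1 := by
  unfold empCopula
  rcases Nat.eq_zero_or_pos n with hn | hn
  · subst hn; simp
  have hn0 : (0:ℝ) < n := by exact_mod_cast hn
  have h1 : ∑ i ∈ Finset.range n,
      (if empCDF X n ω (X i ω) ≤ u then (1:ℝ) else 0) *
      (if empCDF Y n ω (Y i ω) ≤ v then (1:ℝ) else 0) ≤ ∑ _i ∈ Finset.range n, (1:ℝ) := by
    apply Finset.sum_le_sum
    intro i _
    split_ifs <;> norm_num
  calc (n : ℝ)⁻¹ * ∑ i ∈ Finset.range n, _ ≤ (n:ℝ)⁻¹ * ∑ _i ∈ Finset.range n, (1:ℝ) :=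
        mul_le_mul_of_nonneg_left h1 (by positivity)
    _ = 1 := by
        rw [Finset.sum_const, Finset.card_range, nsmul_eq_mul, mul_one]
        field_simp

lemma empCopula_zero {Ω : Type*} (X Y : ℕ → Ω → ℝ) (n : ℕ) (ω : Ω) (v : ℝ) :
    empCopula X Y n ω 0 v = 0 := by
  unfold empCopula
  rcases Nat.eq_zero_or_pos n with hn | hn
  · subst hn; simp
  have hn0 : (0:ℝ) < n := by exact_mod_cast hn
  have : ∀ i ∈ Finset.range n, ¬ (empCDF X n ω (X i ω) ≤ 0) := by
    intro i hi
    unfold empCDF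
    push_neg
    apply mul_pos (by positivity)
    apply Finset.sum_pos' (fun j _ => by positivity)
    exact ⟨i, hi, by simp⟩
  rw [Finset.sum_congr rfl (fun i hi => by rw [if_neg (this i hi), zero_mul])]
  simp

lemma abs_sum_of_sign {d : ℕ → ℝ} (n : ℕ) (hd : (∀ i, 0 ≤ d i) ∨ (∀ i, d i ≤ 0)) :
    ∑ i ∈ Finset.range n, |d i| = |∑ i ∈ Finset.range n, d i| := by
  rcases hd with hd | hd
  · rw [abs_of_nonneg (Finset.sum_nonneg fun i _ => hd i)]
    exact Finset.sum_congr rfl fun i _ => abs_of_nonneg (hd i)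
  · rw [abs_of_nonpos (Finset.sum_nonpos fun i _ => hd i)]
    rw [← Finset.sum_neg_distrib]
    exact Finset.sum_congr rfl fun i _ => abs_of_nonpos (hd i)

lemma ite_sign_of_nested {P Q : ℕ → Prop} [DecidablePred P] [DecidablePred Q] (key : ℕ → ℝ)
    (hP : ∀ i j, key j ≤ key i → P i → P j) (hQ : ∀ i j, key j ≤ key i → Q i → Q j) :
    (∀ i, 0 ≤ (if P i then (1:ℝ) else 0) - (if Q i then (1:ℝ) else 0)) ∨
    (∀ i, (if P i then (1:ℝ) else 0) - (if Q i then (1:ℝ) else 0) ≤ 0) := by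
  classical
  by_cases h : ∀ i, P i → Q i
  · right
    intro i
    by_cases hPi : P i
    · rw [if_pos hPi, if_pos (h i hPi)]; norm_num
    · rw [if_neg hPi]; split_ifs <;> norm_num
  · left
    push_neg at h
    obtain ⟨a, hPa, hQa⟩ := h
    have hQP : ∀ i, Q i → P i := by
      intro i hQi
      rcases le_total (key i) (key a) with hk | hk
      · exact hP a i hk hPa
      · exact absurd (hQ i a hk hQi) hQa
    intro i
    by_cases hQi : Q i
    · rw [if_pos hQi, if_pos (hQP i hQi)]; norm_num
    · rw [if_neg hQi]; split_ifs <;> norm_num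

lemma empCopula_tendsto_pointwise {Ω : Type*} (X Y : ℕ → Ω → ℝ) (ω : Ω)
    (Fx Fy : ℝ → ℝ) (hFxm : Monotone Fx) (hFym : Monotone Fy)
    (u v L : ℝ) (hu : u ∈ Set.Ioc (0:ℝ) 1) (hv : v ∈ Set.Ioc (0:ℝ) 1)
    (hXinj : ∀ i j, i ≠ j → X i ω ≠ X j ω) (hYinj : ∀ i j, i ≠ j → Y i ω ≠ Y j ω)
    (hA : Tendsto (fun n : ℕ => (n:ℝ)⁻¹ * ∑ i ∈ Finset.range n,
        (if Fx (X i ω) ≤ u then (1:ℝ) else 0)) atTop (𝓝 u))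
    (hB : Tendsto (fun n : ℕ => (n:ℝ)⁻¹ * ∑ i ∈ Finset.range n,
        (if Fy (Y i ω) ≤ v then (1:ℝ) else 0)) atTop (𝓝 v))
    (hD : Tendsto (fun n : ℕ => (n:ℝ)⁻¹ * ∑ i ∈ Finset.range n,
        (if Fx (X i ω) ≤ u ∧ Fy (Y i ω) ≤ v then (1:ℝ) else 0)) atTop (𝓝 L)) :
    Tendsto (fun n => empCopula X Y n ω u v) atTop (𝓝 L) := by
  classical
  set ax : ℕ → ℝ := fun n => (n:ℝ)⁻¹ * ∑ i ∈ Finset.range n,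
      (if empCDF X n ω (X i ω) ≤ u then (1:ℝ) else 0) with hax_def
  set ay : ℕ → ℝ := fun n => (n:ℝ)⁻¹ * ∑ i ∈ Finset.range n,
      (if empCDF Y n ω (Y i ω) ≤ v then (1:ℝ) else 0) with hay_def
  set a : ℕ → ℝ := fun n => (n:ℝ)⁻¹ * ∑ i ∈ Finset.range n,
      (if Fx (X i ω) ≤ u then (1:ℝ) else 0) with ha_def
  set b : ℕ → ℝ := fun n => (n:ℝ)⁻¹ * ∑ i ∈ Finset.range n,
      (if Fy (Y i ω) ≤ v then (1:ℝ) else 0) with hb_def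
  set c : ℕ → ℝ := fun n => (n:ℝ)⁻¹ * ∑ i ∈ Finset.range n,
      (if Fx (X i ω) ≤ u ∧ Fy (Y i ω) ≤ v then (1:ℝ) else 0) with hc_def
  -- counting: ax n = n⁻¹ * min ⌊nu⌋ n  and similarly ay
  have haxval : ∀ n : ℕ, ax n = (n:ℝ)⁻¹ * ((min (Nat.floor ((n:ℝ) * u)) n : ℕ) : ℝ) := by
    intro n
    rw [hax_def]
    have hinj' : ∀ i < n, ∀ j < n, X i ω = X j ω → i = j := by
      intro i _ j _ hij
      by_contra h
      exact hXinj i j h hij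
    have := card_rank_le (fun i => X i ω) n hinj' u hu.1.le
    beta_reduce
    rw [Finset.sum_boole, ← this]
    congr 3
  have hayval : ∀ n : ℕ, ay n = (n:ℝ)⁻¹ * ((min (Nat.floor ((n:ℝ) * v)) n : ℕ) : ℝ) := by
    intro n
    rw [hay_def]
    have hinj' : ∀ i < n, ∀ j < n, Y i ω = Y j ω → i = j := by
      intro i _ j _ hij
      by_contra h
      exact hYinj i j h hij
    have := card_rank_le (fun i => Y i ω) n hinj' v hv.1.le
    beta_reduce
    rw [Finset.sum_boole, ← this]
    congr 3
  have haxT : Tendsto ax atTop (𝓝 u) :=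
    (tendsto_floor_div u hu.1.le hu.2).congr (fun n => (haxval n).symm)
  have hayT : Tendsto ay atTop (𝓝 v) :=
    (tendsto_floor_div v hv.1.le hv.2).congr (fun n => (hayval n).symm)
  have hbound : ∀ n : ℕ, ‖empCopula X Y n ω u v - c n‖ ≤ |ax n - a n| + |ay n - b n| := by
    intro n
    have hinv : (0:ℝ) ≤ (n:ℝ)⁻¹ := by positivity
    set fx : ℕ → ℝ := fun i => if empCDF X n ω (X i ω) ≤ u then (1:ℝ) else 0 with hfx
    set fy : ℕ → ℝ := fun i => if empCDF Y n ω (Y i ω) ≤ v then (1:ℝ) else 0 with hfy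
    set gx : ℕ → ℝ := fun i => if Fx (X i ω) ≤ u then (1:ℝ) else 0 with hgx
    set gy : ℕ → ℝ := fun i => if Fy (Y i ω) ≤ v then (1:ℝ) else 0 with hgy
    have hc' : c n = (n:ℝ)⁻¹ * ∑ i ∈ Finset.range n, gx i * gy i := by
      rw [hc_def]
      refine congrArg _ (Finset.sum_congr rfl fun i _ => ?_)
      by_cases h1 : Fx (X i ω) ≤ u <;> by_cases h2 : Fy (Y i ω) ≤ v <;>
        simp [hgx, hgy, h1, h2]
    have hemp : empCopula X Y n ω u v = (n:ℝ)⁻¹ * ∑ i ∈ Finset.range n, fx i * fy i := rfl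
    have hsx : (∀ i, 0 ≤ fx i - gx i) ∨ (∀ i, fx i - gx i ≤ 0) := by
      simp only [hfx, hgx]
      apply ite_sign_of_nested (key := fun i => X i ω)
      · intro i j hk h
        exact le_trans (empCDF_mono X n ω hk) h
      · intro i j hk h
        exact le_trans (hFxm hk) h
    have hsy : (∀ i, 0 ≤ fy i - gy i) ∨ (∀ i, fy i - gy i ≤ 0) := by
      simp only [hfy, hgy]
      apply ite_sign_of_nested (key := fun i => Y i ω)
      · intro i j hk h
        exact le_trans (empCDF_mono Y n ω hk) h
      · intro i j hk h
        exact le_trans (hFym hk) h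
    have e1 : ∑ i ∈ Finset.range n, |fx i - gx i|
        = |∑ i ∈ Finset.range n, (fx i - gx i)| := abs_sum_of_sign n hsx
    have e2 : ∑ i ∈ Finset.range n, |fy i - gy i|
        = |∑ i ∈ Finset.range n, (fy i - gy i)| := abs_sum_of_sign n hsy
    calc ‖empCopula X Y n ω u v - c n‖
        = (n:ℝ)⁻¹ * |∑ i ∈ Finset.range n, (fx i * fy i - gx i * gy i)| := by
          rw [hemp, hc', ← mul_sub, ← Finset.sum_sub_distrib, Real.norm_eq_abs,
            abs_mul, abs_of_nonneg hinv]
      _ ≤ (n:ℝ)⁻¹ * ∑ i ∈ Finset.range n, |fx i * fy i - gx i * gy i| :=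
          mul_le_mul_of_nonneg_left (Finset.abs_sum_le_sum_abs _ _) hinv
      _ ≤ (n:ℝ)⁻¹ * ∑ i ∈ Finset.range n, (|fx i - gx i| + |fy i - gy i|) := by
          refine mul_le_mul_of_nonneg_left (Finset.sum_le_sum fun i _ => ?_) hinv
          simp only [hfx, hfy, hgx, hgy]
          split_ifs <;> norm_num
      _ = (n:ℝ)⁻¹ * |∑ i ∈ Finset.range n, (fx i - gx i)|
            + (n:ℝ)⁻¹ * |∑ i ∈ Finset.range n, (fy i - gy i)| := by
          rw [Finset.sum_add_distrib, mul_add, e1, e2]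
      _ = |ax n - a n| + |ay n - b n| := by
          have ex : ax n - a n = (n:ℝ)⁻¹ * ∑ i ∈ Finset.range n, (fx i - gx i) := by
            simp only [hax_def, ha_def]
            rw [Finset.sum_sub_distrib, mul_sub]
          have ey : ay n - b n = (n:ℝ)⁻¹ * ∑ i ∈ Finset.range n, (fy i - gy i) := by
            simp only [hay_def, hb_def]
            rw [Finset.sum_sub_distrib, mul_sub]
          rw [ex, ey, abs_mul, abs_mul, abs_of_nonneg hinv]
  have hzero : Tendsto (fun n => empCopula X Y n ω u v - c n) atTop (𝓝 0) := by
    apply squeeze_zero_norm hbound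
    have h0 : Tendsto (fun n => |ax n - a n| + |ay n - b n|) atTop (𝓝 (|u - u| + |v - v|)) :=
      (haxT.sub hA).abs.add ((hayT.sub hB).abs)
    simpa using h0
  have hfin := hzero.add hD
  rw [zero_add] at hfin
  exact hfin.congr (fun n => by ring)

lemma integral_tendsto_of_grid (f : ℕ → ℝ → ℝ) (g : ℝ → ℝ)
    (hfm : ∀ n, Monotone (f n)) (hf0 : ∀ n, f n 0 = 0)
    (hfnn : ∀ n u, 0 ≤ f n u)
    (hgm : MonotoneOn g (Icc (0:ℝ) 1)) (hg0 : g 0 = 0)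
    (hglip : ∀ u₁ u₂, 0 ≤ u₁ → u₁ ≤ u₂ → u₂ ≤ 1 → g u₂ - g u₁ ≤ u₂ - u₁)
    (hgrid : ∀ m : ℕ, 0 < m → ∀ k ∈ Finset.Icc 1 m,
      Tendsto (fun n => f n ((k:ℝ)/(m:ℝ))) atTop (𝓝 (g ((k:ℝ)/(m:ℝ))))) :
    Tendsto (fun n => ∫ u in (0:ℝ)..1, f n u) atTop (𝓝 (∫ u in (0:ℝ)..1, g u)) := by
  rw [Metric.tendsto_atTop]
  intro ε hε
  -- choose a grid size
  set m : ℕ := Nat.ceil (4/ε) + 1 with hmdef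
  have hm1 : 0 < m := Nat.succ_pos _
  have hm0 : (0:ℝ) < m := by exact_mod_cast hm1
  have hm2 : 1/(m:ℝ) < ε/4 := by
    have h1 : (4/ε) < m := by
      calc (4/ε) ≤ (Nat.ceil (4/ε) : ℝ) := Nat.le_ceil _
        _ < m := by
          rw [hmdef]
          exact_mod_cast Nat.lt_succ_self _
    rw [div_lt_iff₀ hε] at h1
    rw [div_lt_div_iff₀ hm0 (by norm_num : (0:ℝ) < 4)]
    nlinarith [h1]
  -- eventual closeness at all grid points
  have hev : ∀ᶠ n in atTop, ∀ k ∈ Finset.Icc 1 m,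
      |f n ((k:ℝ)/(m:ℝ)) - g ((k:ℝ)/(m:ℝ))| < ε/4 := by
    rw [eventually_all_finset]
    intro k hk
    have := (hgrid m hm1 k hk)
    have h4 : (0:ℝ) < ε/4 := by positivity
    filter_upwards [eventually_atTop.mpr (Metric.tendsto_atTop.mp this (ε/4) h4)] with n hn
    rw [Real.dist_eq] at hn
    exact hn
  obtain ⟨N, hN⟩ := eventually_atTop.mp hev
  refine ⟨N, fun n hnN => ?_⟩
  have hn := hN n hnN
  -- uniform bound on [0,1]
  have hsup : ∀ x ∈ Icc (0:ℝ) 1, |f n x - g x| ≤ ε/4 + 1/(m:ℝ) := by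
    intro x hx
    rcases eq_or_lt_of_le hx.1 with hx0 | hx0
    · rw [← hx0, hf0, hg0]
      simp only [sub_zero, abs_zero]
      positivity
    · set k := Nat.ceil (x * m) with hk
      have hk1 : 1 ≤ k := Nat.one_le_ceil_iff.mpr (by positivity)
      have hkm : k ≤ m := Nat.ceil_le.mpr (by nlinarith [hx.2])
      have hxk : x ≤ (k:ℝ)/(m:ℝ) := by
        rw [le_div_iff₀ hm0]
        exact Nat.le_ceil _
      have hkx : (k:ℝ)/(m:ℝ) ≤ x + 1/(m:ℝ) := by
        rw [div_le_iff₀ hm0]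
        have := Nat.ceil_lt_add_one (a := x * m) (by positivity)
        rw [add_mul, one_div, inv_mul_cancel₀ (ne_of_gt hm0)]
        linarith [this]
      have hkle1 : (k:ℝ)/(m:ℝ) ≤ 1 := by
        rw [div_le_one hm0]
        exact_mod_cast hkm
      have hkpos : (0:ℝ) < (k:ℝ)/(m:ℝ) := by
        apply div_pos _ hm0
        exact_mod_cast hk1
      have hgk := hn k (Finset.mem_Icc.mpr ⟨hk1, hkm⟩)
      have habs1 := abs_lt.mp hgk
      rw [abs_le]
      constructor
      · -- lower bound: -(ε/4 + 1/m) ≤ f n x - g x, i.e. g x - f n x ≤ ε/4 + 1/m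
        rcases eq_or_lt_of_le hk1 with hk1' | hk2
        · -- k = 1
          have hgx : g x ≤ g ((k:ℝ)/(m:ℝ)) := hgm hx ⟨hkpos.le, hkle1⟩ hxk
          have : g ((k:ℝ)/(m:ℝ)) - g 0 ≤ (k:ℝ)/(m:ℝ) - 0 :=
            hglip 0 _ le_rfl hkpos.le hkle1
          rw [hg0, sub_zero, sub_zero] at this
          have hk1eq : (k:ℝ) = 1 := by exact_mod_cast hk1'.symm
          have hfx := hfnn n x
          have hkm1 : (k:ℝ)/(m:ℝ) ≤ 1/(m:ℝ) := by rw [hk1eq]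
          linarith [this, hgx, hfx, hkm1]
        · -- k ≥ 2
          have hk'm : k - 1 ∈ Finset.Icc 1 m := Finset.mem_Icc.mpr ⟨by omega, by omega⟩
          have hcast : ((k - 1 : ℕ) : ℝ) = (k:ℝ) - 1 := by
            rw [Nat.cast_sub hk1, Nat.cast_one]
          have hk'x : ((k-1:ℕ):ℝ)/(m:ℝ) ≤ x := by
            rw [div_le_iff₀ hm0, hcast]
            have := Nat.ceil_lt_add_one (a := x * m) (by positivity)
            linarith [this]
          have hk'pos : (0:ℝ) ≤ ((k-1:ℕ):ℝ)/(m:ℝ) := by positivity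
          have hgk' := abs_lt.mp (hn (k-1) hk'm)
          have hfm' : f n (((k-1:ℕ):ℝ)/(m:ℝ)) ≤ f n x := hfm n hk'x
          have hgx : g x ≤ g ((k:ℝ)/(m:ℝ)) := hgm hx ⟨hkpos.le, hkle1⟩ hxk
          have hlip : g ((k:ℝ)/(m:ℝ)) - g (((k-1:ℕ):ℝ)/(m:ℝ))
              ≤ (k:ℝ)/(m:ℝ) - ((k-1:ℕ):ℝ)/(m:ℝ) := by
            apply hglip _ _ hk'pos _ hkle1
            rw [div_le_div_iff_of_pos_right hm0, hcast]
            linarith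
          have hdd : (k:ℝ)/(m:ℝ) - ((k-1:ℕ):ℝ)/(m:ℝ) = 1/(m:ℝ) := by
            rw [hcast]
            field_simp
            ring
          linarith [hgk'.1, hfm', hgx, hlip]
      · -- upper bound: f n x - g x ≤ ε/4 + 1/m
        have hfx : f n x ≤ f n ((k:ℝ)/(m:ℝ)) := hfm n hxk
        have hlip : g ((k:ℝ)/(m:ℝ)) - g x ≤ (k:ℝ)/(m:ℝ) - x :=
          hglip x _ hx.1 hxk hkle1
        linarith [habs1.2, hfx, hlip, hkx]
  -- integrate the bound
  have hfi : IntervalIntegrable (f n) MeasureTheory.volume 0 1 :=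
    ((hfm n).monotoneOn _).intervalIntegrable
  have hgm' : MonotoneOn g (uIcc (0:ℝ) 1) := by
    rw [uIcc_of_le (by norm_num : (0:ℝ) ≤ 1)]
    exact hgm
  have hgi : IntervalIntegrable g MeasureTheory.volume 0 1 := hgm'.intervalIntegrable
  rw [Real.dist_eq, ← intervalIntegral.integral_sub hfi hgi]
  have hnorm := intervalIntegral.norm_integral_le_of_norm_le_const
    (C := ε/4 + 1/(m:ℝ)) (f := fun x => f n x - g x) (a := (0:ℝ)) (b := 1) ?_
  · rw [Real.norm_eq_abs] at hnorm
    have : |(1:ℝ) - 0| = 1 := by norm_num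
    rw [this, mul_one] at hnorm
    calc |∫ u in (0:ℝ)..1, (f n u - g u)| ≤ ε/4 + 1/(m:ℝ) := hnorm
      _ < ε/4 + ε/4 := by linarith [hm2]
      _ < ε := by linarith
  · intro x hxI
    have hxI' : x ∈ Icc (0:ℝ) 1 := by
      rw [uIoc_of_le (by norm_num : (0:ℝ) ≤ 1)] at hxI
      exact ⟨le_of_lt hxI.1, hxI.2⟩
    rw [Real.norm_eq_abs]
    exact hsup x hxI'

lemma ite_instance_congr {p : Prop} {h1 h2 : Decidable p} (a b : ℝ) :
    @ite ℝ p h1 a b = @ite ℝ p h2 a b := by congr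




/-- Theorem 3.1, first part. For an i.i.d. sample from a joint
distribution with continuous margins and copula `C`, and any fixed `v ∈ (0,1]`, the
estimator `χ̂ₙ^{Y→X}(v) = 1 − (1/v)∫₀¹ Ĉₙ(u,v) du` converges almost surely to
`χ^{Y→X}_C(v) = 1 − (1/v)∫₀¹ C(u,v) du`. -/
theorem tcte_estimator_strong_consistency_fixed_v
    {Ω : Type*} [MeasurableSpace Ω] (μ : Measure Ω) [IsProbabilityMeasure μ]
    (X Y : ℕ → Ω → ℝ)
    (hmeas : ∀ i, Measurable (fun ω => (X i ω, Y i ω)))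
    (hindep : iIndepFun (fun i ω => (X i ω, Y i ω)) μ)
    (hident : ∀ i, IdentDistrib (fun ω => (X i ω, Y i ω)) (fun ω => (X 0 ω, Y 0 ω)) μ μ)
    (Fx Fy : ℝ → ℝ)
    (hFx : ∀ x, Fx x = (μ {ω | X 0 ω ≤ x}).toReal)
    (hFy : ∀ y, Fy y = (μ {ω | Y 0 ω ≤ y}).toReal)
    (hFxc : Continuous Fx) (hFyc : Continuous Fy)
    (C : ℝ → ℝ → ℝ) (hC : IsCopula C)
    (hlink : ∀ x y, (μ {ω | X 0 ω ≤ x ∧ Y 0 ω ≤ y}).toReal = C (Fx x) (Fy y))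
    (v : ℝ) (hv : v ∈ Set.Ioc (0:ℝ) 1) :
    ∀ᵐ ω ∂μ, Filter.Tendsto
      (fun n => 1 - (1/v) * ∫ u in (0:ℝ)..1, empCopula X Y n ω u v)
      Filter.atTop (𝓝 (1 - (1/v) * ∫ u in (0:ℝ)..1, C u v)) := by
  classical
  have hXm : ∀ i, Measurable (X i) := fun i => (measurable_fst.comp (hmeas i) : _)
  have hYm : ∀ i, Measurable (Y i) := fun i => (measurable_snd.comp (hmeas i) : _)
  haveI hprobX : IsProbabilityMeasure (μ.map (X 0)) :=
    Measure.isProbabilityMeasure_map (hXm 0).aemeasurable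
  haveI hprobY : IsProbabilityMeasure (μ.map (Y 0)) :=
    Measure.isProbabilityMeasure_map (hYm 0).aemeasurable
  have hFxIic : ∀ x, Fx x = ((μ.map (X 0)) (Iic x)).toReal := by
    intro x
    rw [hFx, Measure.map_apply (hXm 0) measurableSet_Iic]
    rfl
  have hFyIic : ∀ x, Fy x = ((μ.map (Y 0)) (Iic x)).toReal := by
    intro x
    rw [hFy, Measure.map_apply (hYm 0) measurableSet_Iic]
    rfl
  have hFxm : Monotone Fx := by
    intro x y hxy
    rw [hFx, hFx]
    exact ENNReal.toReal_mono (measure_ne_top μ _)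
      (measure_mono (fun ω hω => le_trans hω hxy))
  have hFym : Monotone Fy := by
    intro x y hxy
    rw [hFy, hFy]
    exact ENNReal.toReal_mono (measure_ne_top μ _)
      (measure_mono (fun ω hω => le_trans hω hxy))
  have hcdfx : ⇑(ProbabilityTheory.cdf (μ.map (X 0))) = Fx := by
    funext x
    rw [cdf_eq_real, hFxIic]; rfl
  have hcdfy : ⇑(ProbabilityTheory.cdf (μ.map (Y 0))) = Fy := by
    funext x
    rw [cdf_eq_real, hFyIic]; rfl
  have htopX : Tendsto Fx atTop (𝓝 1) := by rw [← hcdfx]; exact tendsto_cdf_atTop _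
  have hbotX : Tendsto Fx atBot (𝓝 0) := by rw [← hcdfx]; exact tendsto_cdf_atBot _
  have htopY : Tendsto Fy atTop (𝓝 1) := by rw [← hcdfy]; exact tendsto_cdf_atTop _
  have hbotY : Tendsto Fy atBot (𝓝 0) := by rw [← hcdfy]; exact tendsto_cdf_atBot _
  have htoReal_le_one : ∀ s : Set Ω, (μ s).toReal ≤ 1 := by
    intro s
    calc (μ s).toReal ≤ (μ Set.univ).toReal :=
          ENNReal.toReal_mono (measure_ne_top μ _) (measure_mono (Set.subset_univ s))
      _ = 1 := by rw [measure_univ, ENNReal.toReal_one]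
  have hFx1 : ∀ x, Fx x ≤ 1 := fun x => by rw [hFx]; exact htoReal_le_one _
  have hFy1 : ∀ x, Fy x ≤ 1 := fun x => by rw [hFy]; exact htoReal_le_one _
  -- key measure identities
  have keyA : ∀ u : ℝ, u ∈ Set.Ioc (0:ℝ) 1 → (μ {ω | Fx (X 0 ω) ≤ u}).toReal = u := by
    intro u hu
    rcases eq_or_lt_of_le hu.2 with h1 | h1
    · have hs : {ω | Fx (X 0 ω) ≤ u} = Set.univ :=
        Set.eq_univ_of_forall (fun ω => by show Fx (X 0 ω) ≤ u; rw [h1]; exact hFx1 _)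
      rw [hs, measure_univ, ENNReal.toReal_one, h1]
    · obtain ⟨p, hp1, hp2⟩ := exists_quantile hFxm hFxc hbotX htopX hu.1 h1
      have hs : {ω | Fx (X 0 ω) ≤ u} = {ω | X 0 ω ≤ p} := Set.ext (fun ω => hp2 _)
      rw [hs, ← hFx, hp1]
  have keyB : (μ {ω | Fy (Y 0 ω) ≤ v}).toReal = v := by
    rcases eq_or_lt_of_le hv.2 with h1 | h1
    · have hs : {ω | Fy (Y 0 ω) ≤ v} = Set.univ :=
        Set.eq_univ_of_forall (fun ω => by show Fy (Y 0 ω) ≤ v; rw [h1]; exact hFy1 _)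
      rw [hs, measure_univ, ENNReal.toReal_one, h1]
    · obtain ⟨q, hq1, hq2⟩ := exists_quantile hFym hFyc hbotY htopY hv.1 h1
      have hs : {ω | Fy (Y 0 ω) ≤ v} = {ω | Y 0 ω ≤ q} := Set.ext (fun ω => hq2 _)
      rw [hs, ← hFy, hq1]
  have keyD : ∀ u : ℝ, u ∈ Set.Ioc (0:ℝ) 1 →
      (μ {ω | Fx (X 0 ω) ≤ u ∧ Fy (Y 0 ω) ≤ v}).toReal = C u v := by
    intro u hu
    rcases eq_or_lt_of_le hv.2 with hv1 | hv1
    · have hs : {ω | Fx (X 0 ω) ≤ u ∧ Fy (Y 0 ω) ≤ v} = {ω | Fx (X 0 ω) ≤ u} :=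
        Set.ext fun ω => ⟨fun h => h.1, fun h => ⟨h, by rw [hv1]; exact hFy1 _⟩⟩
      rw [hs, keyA u hu, hv1]
      exact ((hC.1 u ⟨hu.1.le, hu.2⟩).2.2.1).symm
    · obtain ⟨q, hq1, hq2⟩ := exists_quantile hFym hFyc hbotY htopY hv.1 hv1
      rcases eq_or_lt_of_le hu.2 with hu1 | hu1
      · have hs : {ω | Fx (X 0 ω) ≤ u ∧ Fy (Y 0 ω) ≤ v} = {ω | Fy (Y 0 ω) ≤ v} :=
          Set.ext fun ω => ⟨fun h => h.2, fun h => ⟨by rw [hu1]; exact hFx1 _, h⟩⟩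
        rw [hs, keyB, hu1]
        exact ((hC.1 v ⟨hv.1.le, hv.2⟩).2.2.2).symm
      · obtain ⟨p, hp1, hp2⟩ := exists_quantile hFxm hFxc hbotX htopX hu.1 hu1
        have hs : {ω | Fx (X 0 ω) ≤ u ∧ Fy (Y 0 ω) ≤ v} = {ω | X 0 ω ≤ p ∧ Y 0 ω ≤ q} :=
          Set.ext fun ω => and_congr (hp2 _) (hq2 _)
        rw [hs, hlink p q, hp1, hq1]
  -- almost sure absence of ties
  have hnoatomX : ∀ x : ℝ, (μ.map (X 0)) {x} = 0 := by
    apply no_atoms_of_continuous_cdf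
    have : (fun x => ((μ.map (X 0)) (Iic x)).toReal) = Fx := funext fun x => (hFxIic x).symm
    rw [this]
    exact hFxc
  have hnoatomY : ∀ x : ℝ, (μ.map (Y 0)) {x} = 0 := by
    apply no_atoms_of_continuous_cdf
    have : (fun x => ((μ.map (Y 0)) (Iic x)).toReal) = Fy := funext fun x => (hFyIic x).symm
    rw [this]
    exact hFyc
  have hdiag : MeasurableSet {p : ℝ × ℝ | p.1 = p.2} :=
    (isClosed_eq continuous_fst continuous_snd).measurableSet
  have hties : ∀ (W : ℕ → Ω → ℝ), (∀ i, Measurable (W i)) →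
      (∀ i, μ.map (W i) = μ.map (W 0)) → (∀ x : ℝ, (μ.map (W 0)) {x} = 0) →
      (∀ i j, i ≠ j → IndepFun (W i) (W j) μ) →
      ∀ᵐ ω ∂μ, ∀ i j, i ≠ j → W i ω ≠ W j ω := by
    intro W hWm hWid hWatom hWind
    rw [ae_all_iff]
    intro i
    rw [ae_all_iff]
    intro j
    by_cases hij : i = j
    · exact Filter.Eventually.of_forall (fun ω h => absurd hij h)
    · have hnull : μ {ω | W i ω = W j ω} = 0 := by
        have hmap : μ.map (fun ω => (W i ω, W j ω)) = (μ.map (W i)).prod (μ.map (W j)) :=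
          (indepFun_iff_map_prod_eq_prod_map_map (hWm i).aemeasurable
            (hWm j).aemeasurable).mp (hWind i j hij)
        have hset : {ω | W i ω = W j ω}
            = (fun ω => (W i ω, W j ω)) ⁻¹' {p : ℝ × ℝ | p.1 = p.2} := rfl
        rw [hset, ← Measure.map_apply ((hWm i).prodMk (hWm j)) hdiag, hmap,
          Measure.prod_apply hdiag]
        have hz : ∀ x : ℝ, (μ.map (W j)) (Prod.mk x ⁻¹' {p : ℝ × ℝ | p.1 = p.2}) = 0 := by
          intro x
          have hpre : (Prod.mk x ⁻¹' {p : ℝ × ℝ | p.1 = p.2}) = {x} :=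
            Set.ext fun y => by simp [eq_comm]
          rw [hpre, hWid j]
          exact hWatom x
        rw [lintegral_congr hz]
        exact lintegral_zero
      have := measure_eq_zero_iff_ae_notMem.mp hnull
      filter_upwards [this] with ω hω _
      exact hω
  have hnoX : ∀ᵐ ω ∂μ, ∀ i j, i ≠ j → X i ω ≠ X j ω := by
    apply hties X hXm
    · exact fun i => ((hident i).comp measurable_fst).map_eq
    · exact hnoatomX
    · exact fun i j hij => (hindep.indepFun hij).comp measurable_fst measurable_fst
  have hnoY : ∀ᵐ ω ∂μ, ∀ i j, i ≠ j → Y i ω ≠ Y j ω := by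
    apply hties Y hYm
    · exact fun i => ((hident i).comp measurable_snd).map_eq
    · exact hnoatomY
    · exact fun i j hij => (hindep.indepFun hij).comp measurable_snd measurable_snd
  -- SLLN events
  have eventA : ∀ u : ℝ, u ∈ Set.Ioc (0:ℝ) 1 → (∀ᵐ ω ∂μ,
      Tendsto (fun n : ℕ => (n:ℝ)⁻¹ * ∑ i ∈ Finset.range n,
        (if Fx (X i ω) ≤ u then (1:ℝ) else 0)) atTop (𝓝 u)) := by
    intro u hu
    have hS : MeasurableSet {p : ℝ × ℝ | Fx p.1 ≤ u} :=
      measurableSet_le (hFxc.measurable.comp measurable_fst) measurable_const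
    filter_upwards [slln_indicator μ (fun i ω => (X i ω, Y i ω)) hmeas hindep hident hS]
      with ω hω
    rw [show ((fun ω => (X 0 ω, Y 0 ω)) ⁻¹' {p : ℝ × ℝ | Fx p.1 ≤ u})
        = {ω | Fx (X 0 ω) ≤ u} from rfl, keyA u hu] at hω
    refine hω.congr (fun n => ?_)
    exact congrArg (fun s => (n:ℝ)⁻¹ * s)
      (Finset.sum_congr rfl fun i _ => ite_instance_congr _ _)
  have eventB : ∀ᵐ ω ∂μ,
      Tendsto (fun n : ℕ => (n:ℝ)⁻¹ * ∑ i ∈ Finset.range n,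
        (if Fy (Y i ω) ≤ v then (1:ℝ) else 0)) atTop (𝓝 v) := by
    have hS : MeasurableSet {p : ℝ × ℝ | Fy p.2 ≤ v} :=
      measurableSet_le (hFyc.measurable.comp measurable_snd) measurable_const
    filter_upwards [slln_indicator μ (fun i ω => (X i ω, Y i ω)) hmeas hindep hident hS]
      with ω hω
    rw [show ((fun ω => (X 0 ω, Y 0 ω)) ⁻¹' {p : ℝ × ℝ | Fy p.2 ≤ v})
        = {ω | Fy (Y 0 ω) ≤ v} from rfl, keyB] at hω
    refine hω.congr (fun n => ?_)
    exact congrArg (fun s => (n:ℝ)⁻¹ * s)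
      (Finset.sum_congr rfl fun i _ => ite_instance_congr _ _)
  have eventD : ∀ u : ℝ, u ∈ Set.Ioc (0:ℝ) 1 → (∀ᵐ ω ∂μ,
      Tendsto (fun n : ℕ => (n:ℝ)⁻¹ * ∑ i ∈ Finset.range n,
        (if Fx (X i ω) ≤ u ∧ Fy (Y i ω) ≤ v then (1:ℝ) else 0)) atTop (𝓝 (C u v))) := by
    intro u hu
    have hS : MeasurableSet {p : ℝ × ℝ | Fx p.1 ≤ u ∧ Fy p.2 ≤ v} := by
      have h1 : MeasurableSet {p : ℝ × ℝ | Fx p.1 ≤ u} :=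
        measurableSet_le (hFxc.measurable.comp measurable_fst) measurable_const
      have h2 : MeasurableSet {p : ℝ × ℝ | Fy p.2 ≤ v} :=
        measurableSet_le (hFyc.measurable.comp measurable_snd) measurable_const
      exact h1.inter h2
    filter_upwards [slln_indicator μ (fun i ω => (X i ω, Y i ω)) hmeas hindep hident hS]
      with ω hω
    rw [show ((fun ω => (X 0 ω, Y 0 ω)) ⁻¹' {p : ℝ × ℝ | Fx p.1 ≤ u ∧ Fy p.2 ≤ v})
        = {ω | Fx (X 0 ω) ≤ u ∧ Fy (Y 0 ω) ≤ v} from rfl, keyD u hu] at hω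
    refine hω.congr (fun n => ?_)
    exact congrArg (fun s => (n:ℝ)⁻¹ * s)
      (Finset.sum_congr rfl fun i _ => ite_instance_congr _ _)
  -- grid of events
  have hgridAE : ∀ᵐ ω ∂μ, ∀ m : ℕ, ∀ k : ℕ, k ∈ Finset.Icc 1 m →
      (Tendsto (fun n : ℕ => (n:ℝ)⁻¹ * ∑ i ∈ Finset.range n,
        (if Fx (X i ω) ≤ (k:ℝ)/(m:ℝ) then (1:ℝ) else 0)) atTop (𝓝 ((k:ℝ)/(m:ℝ))) ∧
      Tendsto (fun n : ℕ => (n:ℝ)⁻¹ * ∑ i ∈ Finset.range n,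
        (if Fx (X i ω) ≤ (k:ℝ)/(m:ℝ) ∧ Fy (Y i ω) ≤ v then (1:ℝ) else 0)) atTop
        (𝓝 (C ((k:ℝ)/(m:ℝ)) v))) := by
    rw [ae_all_iff]
    intro m
    rw [ae_all_iff]
    intro k
    by_cases hk : k ∈ Finset.Icc 1 m
    · have hkm := Finset.mem_Icc.mp hk
      have hm0 : (0:ℝ) < m := by
        have : 0 < m := lt_of_lt_of_le hkm.1 hkm.2
        exact_mod_cast this
      have hu0 : (k:ℝ)/(m:ℝ) ∈ Set.Ioc (0:ℝ) 1 :=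
        ⟨div_pos (by exact_mod_cast hkm.1) hm0,
          (div_le_one hm0).mpr (by exact_mod_cast hkm.2)⟩
      filter_upwards [eventA _ hu0, eventD _ hu0] with ω h1 h2 _
      exact ⟨h1, h2⟩
    · exact Filter.Eventually.of_forall (fun ω h => absurd h hk)
  -- copula regularity in the first variable
  have hvIcc : v ∈ Set.Icc (0:ℝ) 1 := ⟨hv.1.le, hv.2⟩
  have hC0 : C 0 v = 0 := (hC.1 v hvIcc).2.1
  have hCmono : MonotoneOn (fun u => C u v) (Set.Icc (0:ℝ) 1) := by
    intro x hx y hy hxy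
    have h2i := hC.2.2 x y 0 v hx.1 hxy hy.2 le_rfl hv.1.le hv.2
    have hx0 : C x 0 = 0 := (hC.1 x hx).1
    have hy0 : C y 0 = 0 := (hC.1 y hy).1
    simp only
    linarith [h2i, hx0, hy0]
  have hClip : ∀ u₁ u₂ : ℝ, 0 ≤ u₁ → u₁ ≤ u₂ → u₂ ≤ 1 → C u₂ v - C u₁ v ≤ u₂ - u₁ := by
    intro u₁ u₂ h0 h12 h21
    have h2i := hC.2.2 u₁ u₂ v 1 h0 h12 h21 hv.1.le hv.2 le_rfl
    have he1 : C u₁ 1 = u₁ := (hC.1 u₁ ⟨h0, le_trans h12 h21⟩).2.2.1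
    have he2 : C u₂ 1 = u₂ := (hC.1 u₂ ⟨le_trans h0 h12, h21⟩).2.2.1
    linarith [h2i, he1, he2]
  -- combine all almost-sure events
  filter_upwards [hnoX, hnoY, eventB, hgridAE] with ω h1 h2 hB hg
  have hInt : Tendsto (fun n => ∫ u in (0:ℝ)..1, empCopula X Y n ω u v) atTop
      (𝓝 (∫ u in (0:ℝ)..1, C u v)) := by
    apply integral_tendsto_of_grid (fun n u => empCopula X Y n ω u v) (fun u => C u v)
    · exact fun n => empCopula_mono_left X Y n ω v
    · exact fun n => empCopula_zero X Y n ω v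
    · exact fun n u => empCopula_nonneg X Y n ω u v
    · exact hCmono
    · exact hC0
    · exact hClip
    · intro m hm k hk
      have hkm := Finset.mem_Icc.mp hk
      have hm0 : (0:ℝ) < m := by exact_mod_cast hm
      have hu0 : (k:ℝ)/(m:ℝ) ∈ Set.Ioc (0:ℝ) 1 :=
        ⟨div_pos (by exact_mod_cast hkm.1) hm0,
          (div_le_one hm0).mpr (by exact_mod_cast hkm.2)⟩
      obtain ⟨hA', hD'⟩ := hg m k hk
      exact empCopula_tendsto_pointwise X Y ω Fx Fy hFxm hFym ((k:ℝ)/(m:ℝ)) v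
        (C ((k:ℝ)/(m:ℝ)) v) hu0 hv h1 h2 hA' hB hD'
  exact (hInt.const_mul (1/v)).const_sub 1
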